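/- Let q ≥ 2 be real, κ ≥ 1 an integer, η ∈ {0, 1}, and α_1, …, α_κ ∈ ℂ with |α_j| = 1 for all j, and set L(s) = (1 − q^{−s})^η·∏_{j=1}^κ (1 − α_j·q^{1/2−s}). There is a constant C = C(q), independent of κ, η and the α_j, such that for every real σ0 > 1/2 and every t ∈ ℝ with L(1/2 + it) ≠ 0: log|L(1/2 + it)| ≤ log|L(σ0 + it)| + (κ/2)·(σ0 − 1/2)·log q + C. -/

import Mathlib

open scoped Classical BigOperators

noncomputable section

/-- The polynomial L-function `L(s) = (1 - q^{-s})^η · ∏_{j=1}^κ (1 - α_j q^{1/2-s})`. -/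
def Lprod (q : ℝ) (κ η : ℕ) (α : Fin κ → ℂ) (s : ℂ) : ℂ :=
  (1 - (q : ℂ) ^ (-s)) ^ η * ∏ j, (1 - α j * (q : ℂ) ^ ((1 : ℂ) / 2 - s))

lemma key_factor (x : ℂ) (hx : ‖x‖ = 1) (r : ℝ) (hr0 : 0 < r) (hr1 : r ≤ 1) :
    ‖1 - x‖ ≤ r ^ (-(1/2) : ℝ) * ‖1 - (r:ℂ) * x‖ := by
  have h1 : Complex.normSq x = 1 := by rw [Complex.normSq_eq_norm_sq, hx]; norm_num
  rw [Complex.normSq_apply] at h1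
  have ha2 : (‖1 - x‖)^2 = 2 - 2 * x.re := by
    rw [Complex.sq_norm, Complex.normSq_apply]
    simp only [Complex.sub_re, Complex.sub_im, Complex.one_re, Complex.one_im]
    nlinarith [h1]
  have hb2 : (‖1 - (r:ℂ) * x‖)^2 = 1 + r^2 - 2 * r * x.re := by
    rw [Complex.sq_norm, Complex.normSq_apply]
    simp only [Complex.sub_re, Complex.sub_im, Complex.one_re, Complex.one_im,
      Complex.mul_re, Complex.mul_im, Complex.ofReal_re, Complex.ofReal_im]
    nlinarith [h1]
  have hcb : 0 ≤ r ^ (-(1/2):ℝ) * ‖1 - (r:ℂ) * x‖ :=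
    mul_nonneg (Real.rpow_nonneg hr0.le _) (norm_nonneg _)
  have hc2 : (r ^ (-(1/2):ℝ))^2 = r⁻¹ := by
    rw [← Real.rpow_natCast (r ^ (-(1/2):ℝ)) 2, ← Real.rpow_mul hr0.le]
    norm_num
    rw [Real.rpow_neg hr0.le, Real.rpow_one]
  have hsq : (‖1 - x‖)^2 ≤ (r ^ (-(1/2):ℝ) * ‖1 - (r:ℂ) * x‖)^2 := by
    rw [mul_pow, hc2, ha2, hb2, inv_mul_eq_div, le_div_iff₀ hr0]
    nlinarith [sq_nonneg (1 - r)]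
  calc ‖1 - x‖ = Real.sqrt ((‖1 - x‖)^2) :=
        (Real.sqrt_sq (norm_nonneg _)).symm
    _ ≤ Real.sqrt ((r ^ (-(1/2):ℝ) * ‖1 - (r:ℂ) * x‖)^2) := Real.sqrt_le_sqrt hsq
    _ = _ := Real.sqrt_sq hcb

/-- the drop of `log|L|` from `σ0 + it` to the critical line is at least
`-(κ/2)(σ0 - 1/2)log q - C`, uniformly in the configuration of zeros. -/
theorem statement19 (q : ℝ) (hq : 2 ≤ q) :
    ∃ C : ℝ, ∀ κ : ℕ, 1 ≤ κ → ∀ η : ℕ, η = 0 ∨ η = 1 →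
      ∀ α : Fin κ → ℂ, (∀ j, ‖α j‖ = 1) →
      ∀ σ0 : ℝ, 1 / 2 < σ0 → ∀ t : ℝ,
      Lprod q κ η α ((1 : ℂ) / 2 + (t : ℂ) * Complex.I) ≠ 0 →
      Real.log (‖Lprod q κ η α ((1 : ℂ) / 2 + (t : ℂ) * Complex.I)‖)
        ≤ Real.log (‖Lprod q κ η α ((σ0 : ℂ) + (t : ℂ) * Complex.I)‖)
          + (κ : ℝ) / 2 * (σ0 - 1 / 2) * Real.log q + C := by
  have hq0 : (0:ℝ) < q := by linarith
  have hq1 : (1:ℝ) < q := by linarith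
  have hqc : (q:ℂ) ≠ 0 := by exact_mod_cast hq0.ne'
  have hhalf : q ^ (-(1/2):ℝ) < 1 := Real.rpow_lt_one_of_one_lt_of_neg hq1 (by norm_num)
  have hhalf0 : (0:ℝ) < q ^ (-(1/2):ℝ) := Real.rpow_pos_of_pos hq0 _
  set M : ℝ := 2 / (1 - q ^ (-(1/2):ℝ)) with hM
  have hM1 : 1 ≤ M := by rw [hM, le_div_iff₀ (by linarith)]; linarith
  refine ⟨Real.log M, ?_⟩
  intro κ hκ η hη α hα σ0 hσ t hL0
  set δ : ℝ := σ0 - 1/2 with hδ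
  have hδ0 : 0 < δ := by rw [hδ]; linarith
  set s1 : ℂ := (1:ℂ)/2 + (t:ℂ)*Complex.I with hs1
  set s2 : ℂ := (σ0:ℂ) + (t:ℂ)*Complex.I with hs2
  set r : ℝ := q ^ (-δ) with hr
  have hr0 : 0 < r := Real.rpow_pos_of_pos hq0 _
  have hr1 : r < 1 := Real.rpow_lt_one_of_one_lt_of_neg hq1 (by linarith)
  have hx1 : ∀ j, ‖α j * (q:ℂ) ^ ((1:ℂ)/2 - s1)‖ = 1 := by
    intro j
    have hre : ((1:ℂ)/2 - s1).re = 0 := by simp [hs1]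
    rw [norm_mul, hα j, Complex.norm_cpow_eq_rpow_re_of_pos hq0, hre, Real.rpow_zero, one_mul]
  have hrel : ∀ j, α j * (q:ℂ) ^ ((1:ℂ)/2 - s2) = (r:ℂ) * (α j * (q:ℂ) ^ ((1:ℂ)/2 - s1)) := by
    intro j
    have h1 : ((1:ℂ)/2 - s2) = ((1:ℂ)/2 - s1) + ((-δ : ℝ) : ℂ) := by
      rw [hs1, hs2, hδ]; push_cast; ring
    have h2 : ((r:ℝ) : ℂ) = (q:ℂ) ^ ((-δ : ℝ) : ℂ) := by
      rw [hr]; exact Complex.ofReal_cpow hq0.le (-δ)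
    rw [h1, Complex.cpow_add _ _ hqc, ← h2]; ring
  -- nonvanishing at s2
  have habs2 : ∀ j, ‖α j * (q:ℂ) ^ ((1:ℂ)/2 - s2)‖ = r := by
    intro j
    rw [hrel j, norm_mul, hx1 j, mul_one, Complex.norm_of_nonneg hr0.le]
  have hB0 : ∀ j, (1 - α j * (q:ℂ) ^ ((1:ℂ)/2 - s2)) ≠ 0 := by
    intro j h
    have hz : α j * (q:ℂ) ^ ((1:ℂ)/2 - s2) = 1 := by
      have := sub_eq_zero.mp h; exact this.symm
    have := habs2 j
    rw [hz] at this
    simp at this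
    linarith
  -- per-factor inequality
  have hc : r ^ (-(1/2):ℝ) = q ^ (δ/2 : ℝ) := by
    rw [hr, ← Real.rpow_mul hq0.le]; congr 1; ring
  have hcpos : (0:ℝ) < q ^ (δ/2 : ℝ) := Real.rpow_pos_of_pos hq0 _
  have hstep : ∀ j, ‖1 - α j * (q:ℂ) ^ ((1:ℂ)/2 - s1)‖
      ≤ q ^ (δ/2 : ℝ) * ‖1 - α j * (q:ℂ) ^ ((1:ℂ)/2 - s2)‖ := by
    intro j
    have := key_factor _ (hx1 j) r hr0 hr1.le
    rw [hc] at this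
    rw [hrel j]
    exact this
  have hprod : ‖∏ j, (1 - α j * (q:ℂ) ^ ((1:ℂ)/2 - s1))‖
      ≤ (q ^ (δ/2 : ℝ)) ^ κ * ‖∏ j, (1 - α j * (q:ℂ) ^ ((1:ℂ)/2 - s2))‖ := by
    rw [norm_prod, norm_prod]
    calc ∏ j, ‖1 - α j * (q:ℂ) ^ ((1:ℂ)/2 - s1)‖
        ≤ ∏ j, (q ^ (δ/2 : ℝ) * ‖1 - α j * (q:ℂ) ^ ((1:ℂ)/2 - s2)‖) :=
          Finset.prod_le_prod (fun j _ => norm_nonneg _) (fun j _ => hstep j)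
      _ = (q ^ (δ/2 : ℝ)) ^ κ * ∏ j, ‖1 - α j * (q:ℂ) ^ ((1:ℂ)/2 - s2)‖ := by
          rw [Finset.prod_mul_distrib, Finset.prod_const, Finset.card_univ, Fintype.card_fin]
  -- eta factor
  have habsq1 : ‖(q:ℂ) ^ (-s1)‖ = q ^ (-(1/2):ℝ) := by
    rw [Complex.norm_cpow_eq_rpow_re_of_pos hq0]
    congr 1
    simp [hs1]
  have habsq2 : ‖(q:ℂ) ^ (-s2)‖ = q ^ (-σ0:ℝ) := by
    rw [Complex.norm_cpow_eq_rpow_re_of_pos hq0]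
    congr 1
    simp [hs2]
  have hqσ : q ^ (-σ0:ℝ) ≤ q ^ (-(1/2):ℝ) :=
    Real.rpow_le_rpow_of_exponent_le hq1.le (by linarith)
  have hE1 : ‖1 - (q:ℂ) ^ (-s1)‖ ≤ 2 := by
    calc ‖1 - (q:ℂ) ^ (-s1)‖ ≤ ‖(1:ℂ)‖ + ‖(q:ℂ) ^ (-s1)‖ := by
          simpa using norm_sub_le (1:ℂ) ((q:ℂ) ^ (-s1))
      _ ≤ 1 + 1 := by rw [norm_one, habsq1]; linarith
      _ = 2 := by norm_num
  have hE2 : 1 - q ^ (-(1/2):ℝ) ≤ ‖1 - (q:ℂ) ^ (-s2)‖ := by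
    have h := norm_sub_norm_le (1:ℂ) ((q:ℂ) ^ (-s2))
    rw [norm_one, habsq2] at h
    linarith
  have hE2ne : (1 - (q:ℂ) ^ (-s2)) ≠ 0 := by
    intro h
    have := hE2
    rw [h, norm_zero] at this
    linarith
  have hE : ‖(1 - (q:ℂ) ^ (-s1))^η‖ ≤ M * ‖(1 - (q:ℂ) ^ (-s2))^η‖ := by
    rcases hη with h | h <;> subst h
    · simpa using hM1
    · rw [pow_one, pow_one]
      have hMmul : M * (1 - q ^ (-(1/2):ℝ)) = 2 := by
        rw [hM]; exact div_mul_cancel₀ 2 (by linarith : (1:ℝ) - q ^ (-(1/2):ℝ) ≠ 0)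
      calc ‖1 - (q:ℂ) ^ (-s1)‖ ≤ 2 := hE1
        _ = M * (1 - q ^ (-(1/2):ℝ)) := hMmul.symm
        _ ≤ M * ‖1 - (q:ℂ) ^ (-s2)‖ := by
            apply mul_le_mul_of_nonneg_left hE2 (by linarith)
  -- combine
  have hLs2ne : Lprod q κ η α s2 ≠ 0 := by
    rw [Lprod]
    exact mul_ne_zero (pow_ne_zero _ hE2ne)
      (Finset.prod_ne_zero_iff.mpr (fun j _ => hB0 j))
  have hmain : ‖Lprod q κ η α s1‖
      ≤ M * ((q ^ (δ/2:ℝ))^κ * ‖Lprod q κ η α s2‖) := by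
    rw [Lprod, Lprod, norm_mul, norm_mul]
    calc ‖(1 - (q:ℂ) ^ (-s1))^η‖ * ‖∏ j, (1 - α j * (q:ℂ) ^ ((1:ℂ)/2 - s1))‖
        ≤ (M * ‖(1 - (q:ℂ) ^ (-s2))^η‖) *
          ((q ^ (δ/2:ℝ))^κ * ‖∏ j, (1 - α j * (q:ℂ) ^ ((1:ℂ)/2 - s2))‖) := by
          apply mul_le_mul hE hprod (norm_nonneg _)
          exact mul_nonneg (by linarith) (norm_nonneg _)
      _ = M * ((q ^ (δ/2:ℝ))^κ *
          (‖(1 - (q:ℂ) ^ (-s2))^η‖ * ‖∏ j, (1 - α j * (q:ℂ) ^ ((1:ℂ)/2 - s2))‖)) := by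
          ring
  have hLs1pos : 0 < ‖Lprod q κ η α s1‖ := norm_pos_iff.mpr hL0
  have hLs2pos : 0 < ‖Lprod q κ η α s2‖ := norm_pos_iff.mpr hLs2ne
  have hcκ : (q ^ (δ/2:ℝ))^κ = q ^ (δ/2 * κ : ℝ) := by
    rw [← Real.rpow_natCast (q ^ (δ/2:ℝ)) κ, ← Real.rpow_mul hq0.le]
  have hlog := Real.log_le_log hLs1pos hmain
  rw [Real.log_mul (by linarith) (by positivity), Real.log_mul (by positivity) hLs2pos.ne',
    hcκ, Real.log_rpow hq0] at hlog
  have hring : δ/2 * (κ:ℝ) * Real.log q = (κ:ℝ)/2 * (σ0 - 1/2) * Real.log q := by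
    rw [hδ]; ring
  linarith

end
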